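/- Let m be an integer, N a positive integer, and set M = max(|m|, |m−1|). If X is an N×N matrix with integer entries such that every row of X contains at most one entry equal to −m, at most one entry equal to m−1, and at most one entry equal to 1, all remaining entries of the row being 0, then |det X| ≤ M^N. -/

import Mathlib

open Finset

/-- Pulling a scalar out of the rows indexed by `s` in a determinant. -/
lemma det_piecewise_smul {n : ℕ} (c : ℤ) (u : Fin n → Fin n → ℤ) (s : Finset (Fin n)) :
    ∀ v : Fin n → Fin n → ℤ,
      Matrix.detRowAlternating (s.piecewise (fun i => c • u i) v)
        = c ^ s.card * Matrix.detRowAlternating (s.piecewise u v) := by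
  classical
  induction s using Finset.induction_on with
  | empty => simp
  | @insert a s ha ih =>
    intro v
    rw [Finset.piecewise_insert, Finset.piecewise_insert,
      Matrix.detRowAlternating.map_update_smul,
      Finset.update_piecewise_of_notMem _ _ _ ha,
      Finset.update_piecewise_of_notMem _ _ _ ha, ih,
      ← Finset.update_piecewise_of_notMem _ _ _ ha,
      Finset.card_insert_of_notMem ha, smul_eq_mul]
    ring

/-- Total-unimodularity-style bound: an integer matrix in which every row has at most one
entry `1`, at most one entry `-1`, and all other entries `0`, has determinant in `{-1,0,1}`. -/
lemma abs_det_le_one_of_rows_network : ∀ (n : ℕ) (W : Matrix (Fin n) (Fin n) ℤ),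
    (∀ i j, W i j = 1 ∨ W i j = -1 ∨ W i j = 0) →
    (∀ i, (Finset.univ.filter (fun j => W i j = 1)).card ≤ 1) →
    (∀ i, (Finset.univ.filter (fun j => W i j = -1)).card ≤ 1) →
    |W.det| ≤ 1 := by
  intro n
  induction n with
  | zero => intro W _ _ _; simp [Matrix.det_fin_zero]
  | succ n ih =>
    intro W hmem h1 h2
    by_cases hall : ∀ i, (∃ j, W i j = 1) ∧ (∃ j, W i j = -1)
    · -- every row sums to zero, hence the determinant vanishes
      have hrow : ∀ i, ∑ j, W i j = 0 := by
        intro i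
        have hsum : ∑ j, W i j =
            (∑ j, if W i j = 1 then (1 : ℤ) else 0)
              - ∑ j, if W i j = -1 then (1 : ℤ) else 0 := by
          rw [← Finset.sum_sub_distrib]
          refine Finset.sum_congr rfl fun j _ => ?_
          rcases hmem i j with h | h | h <;> rw [h] <;> norm_num
        obtain ⟨⟨j1, hj1⟩, ⟨j2, hj2⟩⟩ := hall i
        have c1 : 0 < (Finset.univ.filter (fun j => W i j = 1)).card :=
          Finset.card_pos.mpr ⟨j1, by simp [hj1]⟩
        have c2 : 0 < (Finset.univ.filter (fun j => W i j = -1)).card :=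
          Finset.card_pos.mpr ⟨j2, by simp [hj2]⟩
        have e1 := h1 i
        have e2 := h2 i
        rw [hsum, Finset.sum_boole, Finset.sum_boole]
        have : (Finset.univ.filter (fun j => W i j = 1)).card = 1 := by omega
        have : (Finset.univ.filter (fun j => W i j = -1)).card = 1 := by omega
        simp_all
      have hv : W.mulVec (fun _ => (1 : ℤ)) = 0 := by
        funext i
        simpa [Matrix.mulVec, dotProduct] using hrow i
      have hdet : W.det = 0 := by
        rw [← Matrix.exists_mulVec_eq_zero_iff]
        exact ⟨fun _ => 1, fun h => one_ne_zero (congrFun h 0), hv⟩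
      rw [hdet]; norm_num
    · rw [not_forall] at hall
      obtain ⟨i, hi⟩ := hall
      rw [not_and_or] at hi
      push_neg at hi
      -- the minors also satisfy the hypotheses
      have hminor : ∀ j : Fin (n + 1),
          |(W.submatrix i.succAbove j.succAbove).det| ≤ 1 := by
        intro j
        refine ih _ (fun a b => hmem _ _) (fun a => ?_) (fun a => ?_)
        · refine le_trans (Finset.card_le_card_of_injOn (fun b => j.succAbove b)
            (fun b hb => ?_) (Fin.succAbove_right_injective.injOn)) (h1 (i.succAbove a))
          simp only [Finset.mem_coe, Finset.mem_filter, Finset.mem_univ, true_and] at hb ⊢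
          exact hb
        · refine le_trans (Finset.card_le_card_of_injOn (fun b => j.succAbove b)
            (fun b hb => ?_) (Fin.succAbove_right_injective.injOn)) (h2 (i.succAbove a))
          simp only [Finset.mem_coe, Finset.mem_filter, Finset.mem_univ, true_and] at hb ⊢
          exact hb
      -- the chosen row has at most one nonzero entry
      have hrowsum : ∑ j, |W i j| ≤ 1 := by
        rcases hi with hi | hi
        · calc ∑ j, |W i j| = ∑ j, if W i j = -1 then (1 : ℤ) else 0 := by
                refine Finset.sum_congr rfl fun j _ => ?_
                rcases hmem i j with h | h | h
                · exact absurd h (hi j)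
                · rw [h]; norm_num
                · rw [h]; norm_num
            _ = (Finset.univ.filter (fun j => W i j = -1)).card := Finset.sum_boole _ _
            _ ≤ 1 := by exact_mod_cast h2 i
        · calc ∑ j, |W i j| = ∑ j, if W i j = 1 then (1 : ℤ) else 0 := by
                refine Finset.sum_congr rfl fun j _ => ?_
                rcases hmem i j with h | h | h
                · rw [h]; norm_num
                · exact absurd h (hi j)
                · rw [h]; norm_num
            _ = (Finset.univ.filter (fun j => W i j = 1)).card := Finset.sum_boole _ _
            _ ≤ 1 := by exact_mod_cast h1 i
      rw [Matrix.det_succ_row W i]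
      calc |∑ j : Fin (n+1), (-1) ^ (i + j : ℕ) * W i j * (W.submatrix i.succAbove j.succAbove).det|
          ≤ ∑ j : Fin (n+1), |(-1) ^ (i + j : ℕ) * W i j * (W.submatrix i.succAbove j.succAbove).det| :=
            Finset.abs_sum_le_sum_abs _ _
        _ ≤ ∑ j, |W i j| := by
            refine Finset.sum_le_sum fun j _ => ?_
            rw [abs_mul, abs_mul, abs_pow, abs_neg, abs_one, one_pow, one_mul]
            exact mul_le_of_le_one_right (abs_nonneg _) (hminor j)
        _ ≤ 1 := hrowsum

/-- If every row of the `N × N` integer matrix `X` contains at most one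
entry equal to `-m`, at most one entry equal to `m - 1`, and at most one entry equal to `1`,
all remaining entries being `0`, then `|det X| ≤ M ^ N` where `M = max |m| |m - 1|`. -/
theorem abs_det_le_of_rows_palette (m : ℤ) (N : ℕ) (hN : 0 < N)
    (X : Matrix (Fin N) (Fin N) ℤ)
    (hmem : ∀ i j, X i j = -m ∨ X i j = m - 1 ∨ X i j = 1 ∨ X i j = 0)
    (hneg : ∀ i, (Finset.univ.filter (fun j => X i j = -m)).card ≤ 1)
    (hm1 : ∀ i, (Finset.univ.filter (fun j => X i j = m - 1)).card ≤ 1)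
    (hone : ∀ i, (Finset.univ.filter (fun j => X i j = 1)).card ≤ 1) :
    |X.det| ≤ (max |m| |m - 1|) ^ N := by
  classical
  set c : ℤ := if 1 ≤ m then m - 1 else m with hc
  have hMc : max |m| |m - 1| = |c| + 1 := by
    rcases le_or_gt 1 m with h | h
    · have hc' : c = m - 1 := if_pos h
      rw [hc', abs_of_nonneg (show (0:ℤ) ≤ m - 1 by omega),
        abs_of_nonneg (show (0:ℤ) ≤ m by omega)]
      omega
    · have hc' : c = m := if_neg (by omega)
      rw [hc', abs_of_nonpos (show m - 1 ≤ (0:ℤ) by omega),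
        abs_of_nonpos (show m ≤ (0:ℤ) by omega)]
      omega
  set u : Fin N → Fin N → ℤ := fun i j =>
    if X i j = -m then -1 else if X i j = m - 1 then 1 else 0 with hu
  set v : Fin N → Fin N → ℤ := fun i j =>
    if X i j = -m then (if 1 ≤ m then -1 else 0)
    else if X i j = m - 1 then (if 1 ≤ m then 0 else -1)
    else if X i j = 1 then 1 else 0 with hv
  -- decomposition of the rows of `X`
  have hXuv : X = (fun i => c • u i) + v := by
    funext i j
    have h := hmem i j
    simp only [Pi.add_apply, Pi.smul_apply, smul_eq_mul, hu, hv, hc]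
    split_ifs <;> omega
  -- row properties of `u` and `v`
  have humem : ∀ i j, u i j = 1 ∨ u i j = -1 ∨ u i j = 0 := by
    intro i j; simp only [hu]; split_ifs <;> simp
  have hvmem : ∀ i j, v i j = 1 ∨ v i j = -1 ∨ v i j = 0 := by
    intro i j; simp only [hv]; split_ifs <;> simp
  have hu1 : ∀ i, (Finset.univ.filter (fun j => u i j = 1)).card ≤ 1 := by
    intro i
    refine le_trans (Finset.card_le_card fun j hj => ?_) (hm1 i)
    simp only [Finset.mem_filter, Finset.mem_univ, true_and, hu] at hj ⊢
    split_ifs at hj <;> omega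
  have hu2 : ∀ i, (Finset.univ.filter (fun j => u i j = -1)).card ≤ 1 := by
    intro i
    refine le_trans (Finset.card_le_card fun j hj => ?_) (hneg i)
    simp only [Finset.mem_filter, Finset.mem_univ, true_and, hu] at hj ⊢
    split_ifs at hj <;> omega
  have hv1 : ∀ i, (Finset.univ.filter (fun j => v i j = 1)).card ≤ 1 := by
    intro i
    refine le_trans (Finset.card_le_card fun j hj => ?_) (hone i)
    simp only [Finset.mem_filter, Finset.mem_univ, true_and, hv] at hj ⊢
    split_ifs at hj <;> omega
  have hv2 : ∀ i, (Finset.univ.filter (fun j => v i j = -1)).card ≤ 1 := by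
    intro i
    by_cases h : 1 ≤ m
    · refine le_trans (Finset.card_le_card fun j hj => ?_) (hneg i)
      simp only [Finset.mem_filter, Finset.mem_univ, true_and, hv, if_pos h] at hj ⊢
      split_ifs at hj <;> omega
    · refine le_trans (Finset.card_le_card fun j hj => ?_) (hm1 i)
      simp only [Finset.mem_filter, Finset.mem_univ, true_and, hv, if_neg h] at hj ⊢
      split_ifs at hj <;> omega
  -- expand the determinant multilinearly
  have hdet : X.det = ∑ s : Finset (Fin N),
      c ^ s.card * Matrix.detRowAlternating (s.piecewise u v) := by
    have : X.det = Matrix.detRowAlternating.toMultilinearMap ((fun i => c • u i) + v) := by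
      rw [← hXuv]; rfl
    rw [this, MultilinearMap.map_add_univ]
    exact Finset.sum_congr rfl fun s _ => det_piecewise_smul c u s v
  rw [hdet, hMc]
  calc |∑ s : Finset (Fin N), c ^ s.card * Matrix.detRowAlternating (s.piecewise u v)|
      ≤ ∑ s : Finset (Fin N), |c ^ s.card * Matrix.detRowAlternating (s.piecewise u v)| :=
        Finset.abs_sum_le_sum_abs _ _
    _ ≤ ∑ s : Finset (Fin N), |c| ^ s.card := by
        refine Finset.sum_le_sum fun s _ => ?_
        rw [abs_mul, abs_pow]
        refine mul_le_of_le_one_right (by positivity) ?_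
        refine abs_det_le_one_of_rows_network N (Matrix.of (s.piecewise u v))
          (fun i j => ?_) (fun i => ?_) (fun i => ?_)
        · by_cases h : i ∈ s
          · simpa [Finset.piecewise, h] using humem i j
          · simpa [Finset.piecewise, h] using hvmem i j
        · by_cases h : i ∈ s
          · simpa [Finset.piecewise, h] using hu1 i
          · simpa [Finset.piecewise, h] using hv1 i
        · by_cases h : i ∈ s
          · simpa [Finset.piecewise, h] using hu2 i
          · simpa [Finset.piecewise, h] using hv2 i
    _ = (|c| + 1) ^ N := by
        rw [← Finset.powerset_univ]
        have := Finset.prod_add (fun _ : Fin N => |c|) (fun _ : Fin N => (1 : ℤ)) Finset.univ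
        simp only [Finset.prod_const, one_pow, mul_one,
          Finset.card_univ, Fintype.card_fin] at this
        exact this.symm
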